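/- Let g₁ = X⁴ + 6X²Y² + Y⁴ + 12X²Z² + 24XYZ² + 12Y²Z² + 8Z⁴ and g₂ = X⁴ + 2X²Y² + Y⁴ + 8X²YZ + 8XY²Z + 8X²Z² + 8XYZ² + 8Y²Z² + 8XZ³ + 8YZ³ + 4Z⁴ in ℤ[X,Y,Z]. Then g₁ ≠ g₂, and g₁(A₁, C₁, G₁) = g₂(A₁, C₁, G₁) in ℤ[[q]] (i.e., at level ℓ = 3), while for every odd integer d > 1 one has g₁(A_d, C_d, G_d) ≠ g₂(A_d, C_d, G_d) (i.e., the theta series differ at every level ℓ ≡ 3 mod 8 with ℓ > 3). -/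

import Mathlib

noncomputable section

/-- The positive definite quadratic form `Q_d(x,y) = x² + xy + d y²`. -/
def Qform (d : ℕ) (x y : ℤ) : ℤ := x ^ 2 + x * y + (d : ℤ) * y ^ 2

/-- The coset theta series `θ^{(2,d)}_{a,b}`. -/
def cosetTheta (d : ℕ) (a b : ℤ) : PowerSeries ℤ :=
  PowerSeries.mk fun k =>
    (Set.ncard {mn : ℤ × ℤ |
      Qform d (2 * mn.1 + a) (2 * mn.2 + b) = (k : ℤ)} : ℤ)

/-- `A_d = θ^{(2,d)}_{0,0}`. -/
def Az (d : ℕ) : PowerSeries ℤ := cosetTheta d 0 0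
/-- `C_d = θ^{(2,d)}_{1,0}`. -/
def Cz (d : ℕ) : PowerSeries ℤ := cosetTheta d 1 0
/-- `G_d = θ^{(2,d)}_{0,1}`. -/
def Gz (d : ℕ) : PowerSeries ℤ := cosetTheta d 0 1

open MvPolynomial in
/-- `g₁ = X⁴ + 6X²Y² + Y⁴ + 12X²Z² + 24XYZ² + 12Y²Z² + 8Z⁴`. -/
def g1 : MvPolynomial (Fin 3) ℤ :=
  X 0 ^ 4 + 6 * X 0 ^ 2 * X 1 ^ 2 + X 1 ^ 4 + 12 * X 0 ^ 2 * X 2 ^ 2 +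
    24 * X 0 * X 1 * X 2 ^ 2 + 12 * X 1 ^ 2 * X 2 ^ 2 + 8 * X 2 ^ 4

open MvPolynomial in
/-- `g₂ = X⁴ + 2X²Y² + Y⁴ + 8X²YZ + 8XY²Z + 8X²Z² + 8XYZ² + 8Y²Z² + 8XZ³ + 8YZ³ + 4Z⁴`. -/
def g2 : MvPolynomial (Fin 3) ℤ :=
  X 0 ^ 4 + 2 * X 0 ^ 2 * X 1 ^ 2 + X 1 ^ 4 + 8 * X 0 ^ 2 * X 1 * X 2 +
    8 * X 0 * X 1 ^ 2 * X 2 + 8 * X 0 ^ 2 * X 2 ^ 2 + 8 * X 0 * X 1 * X 2 ^ 2 +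
    8 * X 1 ^ 2 * X 2 ^ 2 + 8 * X 0 * X 2 ^ 3 + 8 * X 1 * X 2 ^ 3 + 4 * X 2 ^ 4

open PowerSeries

lemma sqz {a : ℤ} (h : a ^ 2 ≤ 0) : a = 0 :=
  sq_eq_zero_iff.mp (le_antisymm h (sq_nonneg a))

lemma Az_coeff_zero (d : ℕ) (hd1 : 1 ≤ d) : (coeff (R := ℤ) 0) (Az d) = 1 := by
  rw [Az, cosetTheta, coeff_mk]
  have : {mn : ℤ × ℤ | Qform d (2 * mn.1 + 0) (2 * mn.2 + 0) = ((0:ℕ) : ℤ)}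
      = {((0:ℤ), (0:ℤ))} := by
    ext ⟨m, n⟩
    simp only [Set.mem_setOf_eq, Set.mem_singleton_iff, Prod.mk.injEq, Qform]
    constructor
    · intro h
      push_cast at h
      have hd : (1:ℤ) ≤ (d:ℤ) := by exact_mod_cast hd1
      have hn : n = 0 := sqz (by nlinarith [sq_nonneg (4*m + 2*n), sq_nonneg n])
      subst hn
      have hm : m = 0 := sqz (by nlinarith)
      exact ⟨hm, rfl⟩
    · rintro ⟨rfl, rfl⟩; ring
  rw [this, Set.ncard_singleton]; norm_num

lemma Az_coeff_ne (d : ℕ) (k : ℕ) (hk : ¬ (4:ℤ) ∣ (k:ℤ)) : (coeff (R := ℤ) k) (Az d) = 0 := by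
  rw [Az, cosetTheta, coeff_mk]
  have : {mn : ℤ × ℤ | Qform d (2 * mn.1 + 0) (2 * mn.2 + 0) = ((k:ℕ) : ℤ)} = ∅ := by
    ext ⟨m, n⟩
    simp only [Set.mem_setOf_eq, Set.mem_empty_iff_false, iff_false, Qform]
    intro h
    exact hk ⟨m^2 + m*n + (d:ℤ)*n^2, by linear_combination -h⟩
  rw [this]; simp

lemma Cz_coeff_even (d : ℕ) (k : ℕ) (hk : ¬ (2:ℤ) ∣ ((k:ℤ) - 1)) : (coeff (R := ℤ) k) (Cz d) = 0 := by
  rw [Cz, cosetTheta, coeff_mk]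
  have : {mn : ℤ × ℤ | Qform d (2 * mn.1 + 1) (2 * mn.2 + 0) = ((k:ℕ) : ℤ)} = ∅ := by
    ext ⟨m, n⟩
    simp only [Set.mem_setOf_eq, Set.mem_empty_iff_false, iff_false, Qform]
    intro h
    exact hk ⟨2*m^2 + 2*m + 2*m*n + n + 2*(d:ℤ)*n^2, by linear_combination -h⟩
  rw [this]; simp

lemma Cz_coeff_one (d : ℕ) (hd1 : 1 ≤ d) : (coeff (R := ℤ) 1) (Cz d) = 2 := by
  rw [Cz, cosetTheta, coeff_mk]
  have : {mn : ℤ × ℤ | Qform d (2 * mn.1 + 1) (2 * mn.2 + 0) = ((1:ℕ) : ℤ)}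
      = {((0:ℤ), (0:ℤ)), ((-1:ℤ), (0:ℤ))} := by
    ext ⟨m, n⟩
    simp only [Set.mem_setOf_eq, Set.mem_insert_iff, Set.mem_singleton_iff,
      Prod.mk.injEq, Qform]
    constructor
    · intro h
      push_cast at h
      have hd : (1:ℤ) ≤ (d:ℤ) := by exact_mod_cast hd1
      have hn : n = 0 := sqz (by nlinarith [sq_nonneg (4*m + 2 + 2*n)])
      subst hn
      have hm4 : (4:ℤ) * (m * (m + 1)) = 0 := by linear_combination h
      have hm : m * (m + 1) = 0 := by
        rcases mul_eq_zero.mp hm4 with h1 | h1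
        · norm_num at h1
        · exact h1
      rcases mul_eq_zero.mp hm with h1 | h1
      · exact Or.inl ⟨h1, rfl⟩
      · exact Or.inr ⟨by omega, rfl⟩
    · rintro (⟨rfl, rfl⟩ | ⟨rfl, rfl⟩) <;> ring
  rw [this, Set.ncard_pair (by norm_num [Prod.ext_iff])]; norm_num

lemma Gz_coeff_small (d : ℕ) (hd3 : 3 ≤ d) (k : ℕ) (hk : k ≤ 2) : (coeff (R := ℤ) k) (Gz d) = 0 := by
  rw [Gz, cosetTheta, coeff_mk]
  have : {mn : ℤ × ℤ | Qform d (2 * mn.1 + 0) (2 * mn.2 + 1) = ((k:ℕ) : ℤ)} = ∅ := by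
    ext ⟨m, n⟩
    simp only [Set.mem_setOf_eq, Set.mem_empty_iff_false, iff_false, Qform]
    intro h
    have hd : (3:ℤ) ≤ (d:ℤ) := by exact_mod_cast hd3
    have hkk : ((k:ℕ):ℤ) ≤ 2 := by exact_mod_cast hk
    have h1 : 1 ≤ (2*n+1)^2 := by rcases le_or_gt 0 n with h' | h' <;> nlinarith
    nlinarith [sq_nonneg (4*m + 2*n + 1)]
  rw [this]; simp

lemma X3_dvd_Az (d : ℕ) (hd3 : 3 ≤ d) : (X : PowerSeries ℤ)^3 ∣ Az d - 1 := by
  rw [X_pow_dvd_iff]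
  intro m hm
  rw [map_sub]
  interval_cases m
  · rw [Az_coeff_zero d (by omega)]; simp
  · rw [Az_coeff_ne d 1 (by norm_num)]; simp [coeff_one]
  · rw [Az_coeff_ne d 2 (by norm_num)]; simp [coeff_one]

lemma X3_dvd_Cz (d : ℕ) (hd3 : 3 ≤ d) : (X : PowerSeries ℤ)^3 ∣ Cz d - C (R := ℤ) 2 * X := by
  rw [X_pow_dvd_iff]
  intro m hm
  rw [map_sub, coeff_C_mul]
  interval_cases m
  · rw [Cz_coeff_even d 0 (by norm_num)]; simp [coeff_X]
  · rw [Cz_coeff_one d (by omega)]; simp [coeff_X]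
  · rw [Cz_coeff_even d 2 (by norm_num)]; simp [coeff_X]

lemma X3_dvd_Gz (d : ℕ) (hd3 : 3 ≤ d) : (X : PowerSeries ℤ)^3 ∣ Gz d := by
  rw [X_pow_dvd_iff]
  intro m hm
  exact Gz_coeff_small d hd3 m (by omega)

lemma part3 (d : ℕ) (hd1 : 1 < d) (hodd : Odd d) :
    MvPolynomial.aeval ![Az d, Cz d, Gz d] g1 ≠ MvPolynomial.aeval ![Az d, Cz d, Gz d] g2 := by
  intro h
  have hd3 : 3 ≤ d := by obtain ⟨j, hj⟩ := hodd; omega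
  have hA := X3_dvd_Az d hd3
  have hC := X3_dvd_Cz d hd3
  have hG := X3_dvd_Gz d hd3
  set A := Az d with hA'
  set Cc := Cz d with hC'
  set G := Gz d with hG'
  rw [show C (R := ℤ) 2 = (2 : PowerSeries ℤ) from map_ofNat (C (R := ℤ)) 2] at hC
  simp only [g1, g2, map_add, map_mul, map_pow, map_ofNat, MvPolynomial.aeval_X,
    Matrix.cons_val_zero, Matrix.cons_val_one, Matrix.head_cons, Matrix.cons_val_two,
    Matrix.tail_cons] at h
  have hACX : (X : PowerSeries ℤ)^3 ∣ A * Cc - 2 * X := by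
    have e : A * Cc - 2 * X = A * (Cc - 2 * X) + (2 * X) * (A - 1) := by ring
    rw [e]
    exact dvd_add (hC.mul_left A) (hA.mul_left _)
  have key : (X : PowerSeries ℤ)^3 ∣ (16 : PowerSeries ℤ) * X^2 := by
    have heq : (16 : PowerSeries ℤ) * X^2 =
        -(4 * ((A*Cc - 2*X) * (A*Cc + 2*X))
          + G * (-(8*A^2*Cc) - 8*A*Cc^2 + 4*A^2*G + 16*A*Cc*G + 4*Cc^2*G - 8*A*G^2
            - 8*Cc*G^2 + 4*G^3)) := by
      linear_combination h
    rw [heq]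
    exact dvd_neg.mpr (dvd_add ((hACX.mul_right _).mul_left 4) (hG.mul_right _))
  have h2 : (coeff (R := ℤ) 2) ((16 : PowerSeries ℤ) * X^2) = 0 :=
    X_pow_dvd_iff.mp key 2 (by norm_num)
  rw [show (16 : PowerSeries ℤ) = C (R := ℤ) 16 from (map_ofNat (C (R := ℤ)) 16).symm, coeff_C_mul,
    coeff_X_pow] at h2
  norm_num at h2

lemma CG1 : Cz 1 = Gz 1 := by
  ext k
  rw [Cz, Gz, cosetTheta, cosetTheta, coeff_mk, coeff_mk]
  congr 1
  have himg : {mn : ℤ × ℤ | Qform 1 (2 * mn.1 + 0) (2 * mn.2 + 1) = (k : ℤ)}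
      = (fun mn : ℤ × ℤ => (mn.2, -mn.1 - mn.2 - 1)) ''
        {mn : ℤ × ℤ | Qform 1 (2 * mn.1 + 1) (2 * mn.2 + 0) = (k : ℤ)} := by
    ext ⟨a, b⟩
    simp only [Set.mem_setOf_eq, Set.mem_image, Prod.mk.injEq, Prod.exists, Qform]
    constructor
    · intro h
      exact ⟨-a - b - 1, a, by push_cast at h ⊢; linear_combination h, rfl, by ring⟩
    · rintro ⟨m, n, hq, rfl, rfl⟩
      push_cast at hq ⊢
      linear_combination hq
  rw [himg, Set.ncard_image_of_injective _ (fun p q hpq => by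
    simp only [Prod.mk.injEq] at hpq
    obtain ⟨h1, h2⟩ := hpq
    exact Prod.ext (by omega) h1)]

lemma part2 : MvPolynomial.aeval ![Az 1, Cz 1, Gz 1] g1 = MvPolynomial.aeval ![Az 1, Cz 1, Gz 1] g2 := by
  simp only [g1, g2, map_add, map_mul, map_pow, map_ofNat, MvPolynomial.aeval_X,
    Matrix.cons_val_zero, Matrix.cons_val_one, Matrix.head_cons, Matrix.cons_val_two,
    Matrix.tail_cons]
  rw [← CG1]
  ring

lemma part1 : g1 ≠ g2 := by
  intro h
  have h2 := congrArg (MvPolynomial.eval ![(1:ℤ), 1, 0]) h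
  simp only [g1, g2, map_add, map_mul, map_pow, map_ofNat, MvPolynomial.eval_X,
    Matrix.cons_val_zero, Matrix.cons_val_one, Matrix.head_cons, Matrix.cons_val_two,
    Matrix.tail_cons] at h2
  norm_num at h2

theorem stmt13 :
    g1 ≠ g2 ∧
    MvPolynomial.aeval ![Az 1, Cz 1, Gz 1] g1 =
      MvPolynomial.aeval ![Az 1, Cz 1, Gz 1] g2 ∧
    (∀ d : ℕ, 1 < d → Odd d →
      MvPolynomial.aeval ![Az d, Cz d, Gz d] g1 ≠
        MvPolynomial.aeval ![Az d, Cz d, Gz d] g2) :=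
  ⟨part1, part2, part3⟩
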